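/- Let $T$ be the $n \times n$ Hessenberg–Toeplitz matrix with entries $T_{ij} = a_{i-j+1}$ for $i \ge j$, $T_{ij} = 1$ for $j = i+1$, and $T_{ij} = 0$ for $j > i+1$. For a nonempty set $S \subseteq \{1,\dots,n\}$, let $\tau_S(T)$ denote the minor of $T$ with rows indexed by $S$ and columns given by the first $|S|$ columns; set $\tau_\emptyset(T)=1$. Assume all minors $\tau_{[j]}(T)$ for $j \le n$ are nonzero. Then $T = LU$ where $L$ is lower triangular with $L_{ij} = \tau_{\{i\}\cup[j-1]}(T)/\tau_{[j]}(T)$ for $i \ge j$ and $0$ otherwise, and $U$ is upper bidiagonal with $U_{ii} = \tau_{[i]}(T)/\tau_{[i-1]}(T)$, $U_{i,i+1}=1$, and $0$ otherwise. -/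

import Mathlib

/-- The initial minor of `T` with rows indexed by `S` (in increasing order) and
columns given by the first `S.card` columns. For `S = ∅` this is `1`. -/
noncomputable def tauInit {n : ℕ} (T : Matrix (Fin n) (Fin n) ℝ) (S : Finset (Fin n)) : ℝ :=
  Matrix.det (Matrix.of fun i j : Fin S.card =>
    T (S.orderEmbOfFin rfl i)
      ⟨(j : ℕ), lt_of_lt_of_le j.isLt (by simpa using S.card_le_univ)⟩)

lemma tauInit_eq_det {n k : ℕ} (T : Matrix (Fin n) (Fin n) ℝ) (S : Finset (Fin n))
    (hS : S.card = k) (hkn : k ≤ n) (f : Fin k → Fin n)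
    (hfs : ∀ x, f x ∈ S) (hmono : StrictMono f) :
    tauInit T S = Matrix.det (Matrix.of fun p q : Fin k =>
      T (f p) ⟨(q : ℕ), lt_of_lt_of_le q.isLt hkn⟩) := by
  subst hS
  unfold tauInit
  congr 1
  ext p q
  rw [Finset.orderEmbOfFin_unique (rfl) hfs hmono]

/-- leading principal submatrix -/
noncomputable def pmat {n : ℕ} (T : Matrix (Fin n) (Fin n) ℝ) (k : ℕ) (hk : k ≤ n) :
    Matrix (Fin k) (Fin k) ℝ :=
  Matrix.of fun p q => T ⟨p, lt_of_lt_of_le p.isLt hk⟩ ⟨q, lt_of_lt_of_le q.isLt hk⟩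

noncomputable def mmat {n : ℕ} (T : Matrix (Fin n) (Fin n) ℝ) (i : Fin n) (k : ℕ)
    (hk : k ≤ (i : ℕ)) : Matrix (Fin (k+1)) (Fin (k+1)) ℝ :=
  Matrix.of fun p q =>
    T (if h : (p : ℕ) < k then ⟨p, lt_of_lt_of_le h (le_of_lt (lt_of_le_of_lt hk i.isLt))⟩ else i)
      ⟨q, lt_of_lt_of_le q.isLt (Nat.succ_le_of_lt (lt_of_le_of_lt hk i.isLt))⟩

lemma tau_Iic {n : ℕ} (T : Matrix (Fin n) (Fin n) ℝ) (j : Fin n) :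
    tauInit T (Finset.Iic j) = (pmat T ((j : ℕ)+1) j.isLt).det := by
  rw [tauInit_eq_det T _ (Fin.card_Iic j) j.isLt
    (fun p => ⟨p, lt_of_lt_of_le p.isLt j.isLt⟩)]
  · rfl
  · intro x; simp only [Finset.mem_Iic, Fin.le_def]; exact Nat.lt_succ_iff.mp x.isLt
  · intro x y h; simpa only [Fin.lt_def] using h

lemma tau_Iio {n : ℕ} (T : Matrix (Fin n) (Fin n) ℝ) (j : Fin n) :
    tauInit T (Finset.Iio j) = (pmat T (j : ℕ) (le_of_lt j.isLt)).det := by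
  rw [tauInit_eq_det T _ (Fin.card_Iio j) (le_of_lt j.isLt)
    (fun p => ⟨p, lt_trans p.isLt j.isLt⟩)]
  · rfl
  · intro x; simp only [Finset.mem_Iio, Fin.lt_def]; exact x.isLt
  · intro x y h; simpa only [Fin.lt_def] using h

lemma tau_insert {n : ℕ} (T : Matrix (Fin n) (Fin n) ℝ) (i j : Fin n) (hji : (j : ℕ) ≤ (i : ℕ)) :
    tauInit T (insert i (Finset.Iio j)) = (mmat T i (j : ℕ) hji).det := by
  have hcard : (insert i (Finset.Iio j)).card = (j : ℕ) + 1 := by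
    rw [Finset.card_insert_of_notMem (by simp only [Finset.mem_Iio, Fin.lt_def]; omega),
      Fin.card_Iio]
  rw [tauInit_eq_det T _ hcard (Nat.succ_le_of_lt (lt_of_le_of_lt hji i.isLt))
    (fun p => if h : (p : ℕ) < (j : ℕ) then
      ⟨p, lt_of_lt_of_le h (le_of_lt (lt_of_le_of_lt hji i.isLt))⟩ else i)]
  · rfl
  · intro x
    by_cases h : (x : ℕ) < (j : ℕ)
    · rw [dif_pos h]
      exact Finset.mem_insert_of_mem (by simp only [Finset.mem_Iio, Fin.lt_def]; exact h)
    · rw [dif_neg h]; exact Finset.mem_insert_self _ _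
  · intro x y hxy
    dsimp only
    rcases lt_or_ge (y : ℕ) (j : ℕ) with hy | hy
    · have hx : (x : ℕ) < (j : ℕ) := lt_trans hxy hy
      rw [dif_pos hx, dif_pos hy]
      simpa only [Fin.lt_def] using hxy
    · have hy' : ¬ (y : ℕ) < (j : ℕ) := not_lt.mpr hy
      have hx : (x : ℕ) < (j : ℕ) := by
        have := x.isLt; have := y.isLt
        have hxy' : (x:ℕ) < (y:ℕ) := hxy
        omega
      rw [dif_pos hx, dif_neg hy']
      simp only [Fin.lt_def]; omega

lemma mmat_expand {n : ℕ} (a : Fin n → ℝ) (T : Matrix (Fin n) (Fin n) ℝ)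
    (hT : ∀ i j : Fin n, T i j =
      if (j : ℕ) ≤ (i : ℕ) then
        a ⟨(i : ℕ) - (j : ℕ), lt_of_le_of_lt (Nat.sub_le _ _) i.isLt⟩
      else if (j : ℕ) = (i : ℕ) + 1 then 1 else 0)
    (i : Fin n) (k : ℕ) (hk : k + 1 ≤ (i : ℕ)) (hk' : k ≤ (i : ℕ)) :
    (mmat T i (k+1) hk).det =
      T i ⟨k+1, lt_of_le_of_lt hk i.isLt⟩
        * (pmat T (k+1) (lt_of_le_of_lt hk i.isLt).le).det
        - (mmat T i k hk').det := by
  rw [Matrix.det_succ_column (mmat T i (k+1) hk) (Fin.last (k+1))]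
  rw [Finset.sum_eq_add_of_mem (⟨k, by omega⟩ : Fin (k+2)) (⟨k+1, by omega⟩ : Fin (k+2))
      (Finset.mem_univ _) (Finset.mem_univ _) (by simp [Fin.ext_iff]) ?vanish]
  case vanish =>
    intro c _ hc
    have hclt : (c : ℕ) < k := by
      have := c.isLt
      rcases hc with ⟨h1, h2⟩
      have h1' : (c : ℕ) ≠ k := fun h => h1 (Fin.ext h)
      have h2' : (c : ℕ) ≠ k + 1 := fun h => h2 (Fin.ext h)
      omega
    have hzero : (mmat T i (k+1) hk) c (Fin.last (k+1)) = 0 := by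
      simp only [mmat, Matrix.of_apply]
      rw [dif_pos (by omega : (c : ℕ) < k + 1), hT]
      simp only [Fin.val_last]
      rw [if_neg (by omega), if_neg (by omega)]
    rw [hzero]
    ring
  · -- compute the two terms
    have e2 : (mmat T i (k+1) hk) ⟨k+1, by omega⟩ (Fin.last (k+1))
        = T i ⟨k+1, lt_of_le_of_lt hk i.isLt⟩ := by
      simp only [mmat, Matrix.of_apply, Fin.val_last]
      rw [dif_neg (by omega : ¬ (k+1 : ℕ) < k + 1)]
    have e1 : (mmat T i (k+1) hk) ⟨k, by omega⟩ (Fin.last (k+1)) = 1 := by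
      simp only [mmat, Matrix.of_apply, Fin.val_last]
      rw [dif_pos (by omega : (k : ℕ) < k + 1), hT]
      simp
    have s2 : (mmat T i (k+1) hk).submatrix (⟨k+1, by omega⟩ : Fin (k+2)).succAbove
        (Fin.last (k+1)).succAbove = pmat T (k+1) (lt_of_le_of_lt hk i.isLt).le := by
      have hlast : (⟨k+1, by omega⟩ : Fin (k+2)) = Fin.last (k+1) := rfl
      ext p q
      simp only [Matrix.submatrix_apply, hlast, Fin.succAbove_last, mmat, pmat, Matrix.of_apply]
      rw [dif_pos (by simpa using p.isLt : ((Fin.castSucc p) : ℕ) < k+1)]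
      exact congrArg₂ T (Fin.ext (by simp)) (Fin.ext (by simp))
    have s1 : (mmat T i (k+1) hk).submatrix (⟨k, by omega⟩ : Fin (k+2)).succAbove
        (Fin.last (k+1)).succAbove = mmat T i k hk' := by
      ext p q
      simp only [Matrix.submatrix_apply, Fin.succAbove_last, mmat, Matrix.of_apply]
      rcases lt_or_ge (p : ℕ) k with hp | hp
      · rw [Fin.succAbove_of_castSucc_lt _ _ (by simpa [Fin.lt_def] using hp)]
        rw [dif_pos (by simpa using lt_trans hp (Nat.lt_succ_self k) :
          ((Fin.castSucc p) : ℕ) < k+1), dif_pos hp]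
        exact congrArg₂ T (Fin.ext (by simp)) (Fin.ext (by simp))
      · rw [Fin.succAbove_of_le_castSucc _ _ (by simpa [Fin.le_def] using hp)]
        rw [dif_neg (by simp [Fin.val_succ]; omega), dif_neg (by omega)]
        exact congrArg₂ T rfl (Fin.ext (by simp))
    rw [e1, e2, s1, s2]
    simp only [Fin.val_last]
    have sg1 : ((-1 : ℝ)) ^ ((k : ℕ) + (k+1)) = -1 := Odd.neg_one_pow ⟨k, by ring⟩
    have sg2 : ((-1 : ℝ)) ^ ((k + 1 : ℕ) + (k+1)) = 1 := Even.neg_one_pow ⟨k+1, by ring⟩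
    rw [sg1, sg2]
    ring

lemma tauInit_empty {n : ℕ} (T : Matrix (Fin n) (Fin n) ℝ) :
    tauInit T (∅ : Finset (Fin n)) = 1 := by
  unfold tauInit
  exact Matrix.det_fin_zero

lemma tau_single {n : ℕ} (T : Matrix (Fin n) (Fin n) ℝ) (i : Fin n) :
    tauInit T {i} = T i ⟨0, lt_of_le_of_lt (Nat.zero_le _) i.isLt⟩ := by
  rw [tauInit_eq_det T _ (Finset.card_singleton i)
    (Nat.one_le_iff_ne_zero.mpr (by have := i.isLt; omega)) (fun _ => i)
    (fun x => Finset.mem_singleton_self i)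
    (fun x y hxy => absurd hxy (by omega))]
  rw [Matrix.det_fin_one]
  rfl

lemma tau_insert' {n : ℕ} (T : Matrix (Fin n) (Fin n) ℝ) (i j : Fin n) (k : ℕ)
    (hjk : (j : ℕ) = k) (hk : k ≤ (i : ℕ)) :
    tauInit T (insert i (Finset.Iio j)) = (mmat T i k hk).det := by
  subst hjk; exact tau_insert T i j hk

lemma tau_Iio' {n : ℕ} (T : Matrix (Fin n) (Fin n) ℝ) (j : Fin n) (k : ℕ)
    (hjk : (j : ℕ) = k) (hk : k ≤ n) :
    tauInit T (Finset.Iio j) = (pmat T k hk).det := by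
  subst hjk; exact tau_Iio T j

lemma tau_Iic' {n : ℕ} (T : Matrix (Fin n) (Fin n) ℝ) (j : Fin n) (k : ℕ)
    (hjk : (j : ℕ) + 1 = k) (hk : k ≤ n) :
    tauInit T (Finset.Iic j) = (pmat T k hk).det := by
  subst hjk; exact tau_Iic T j

/-- Explicit LU decomposition of a totally positive Hessenberg–Toeplitz matrix in
terms of its initial minors (Theorem `thm:LU-T`). Indices are 0-based, so the
1-based set `[j]` corresponds to `Finset.Iic j` and `[j-1]` to `Finset.Iio j`. -/
theorem TPHT_LU_decomposition (n : ℕ) (a : Fin n → ℝ)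
    (T : Matrix (Fin n) (Fin n) ℝ)
    (hT : ∀ i j : Fin n, T i j =
      if (j : ℕ) ≤ (i : ℕ) then
        a ⟨(i : ℕ) - (j : ℕ), lt_of_le_of_lt (Nat.sub_le _ _) i.isLt⟩
      else if (j : ℕ) = (i : ℕ) + 1 then 1 else 0)
    (hτ : ∀ j : Fin n, tauInit T (Finset.Iic j) ≠ 0) :
    T = (Matrix.of fun i j : Fin n =>
          if (j : ℕ) ≤ (i : ℕ) then
            tauInit T (insert i (Finset.Iio j)) / tauInit T (Finset.Iic j)
          else 0)
      * (Matrix.of fun i j : Fin n =>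
          if i = j then tauInit T (Finset.Iic i) / tauInit T (Finset.Iio i)
          else if (j : ℕ) = (i : ℕ) + 1 then 1 else 0) := by
  ext i k
  rw [Matrix.mul_apply]
  by_cases hk0 : (k : ℕ) = 0
  · rw [Finset.sum_eq_single_of_mem k (Finset.mem_univ k) ?van0]
    case van0 =>
      intro j _ hj
      simp only [Matrix.of_apply]
      rw [if_neg hj, if_neg (show ¬ (k:ℕ) = (j:ℕ)+1 by omega)]
      exact mul_zero _
    have hIio : Finset.Iio k = (∅ : Finset (Fin n)) := by
      ext x; simp only [Finset.mem_Iio, Finset.notMem_empty, iff_false, Fin.lt_def]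
      omega
    simp only [Matrix.of_apply]
    rw [if_pos (by omega : (k : ℕ) ≤ (i : ℕ)), if_pos trivial, hIio, tauInit_empty]
    have hins : insert i (∅ : Finset (Fin n)) = {i} := rfl
    rw [hins, tau_single]
    have hTik : T i ⟨0, lt_of_le_of_lt (Nat.zero_le _) i.isLt⟩ = T i k :=
      congrArg₂ T rfl (Fin.ext hk0.symm)
    rw [hTik]
    have h1 := hτ k
    field_simp
  · obtain ⟨m, hm⟩ : ∃ m, (k : ℕ) = m + 1 := ⟨(k : ℕ) - 1, by omega⟩
    set k' : Fin n := ⟨m, by omega⟩ with hk'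
    have hk'v : (k' : ℕ) = m := rfl
    rw [Finset.sum_eq_add_of_mem k' k (Finset.mem_univ _) (Finset.mem_univ _)
      (Fin.ne_of_val_ne (by omega)) ?van1]
    case van1 =>
      intro c _ hc
      have hc1 : c ≠ k' := hc.1
      have hc2 : c ≠ k := hc.2
      have hcv : (c : ℕ) ≠ m := fun h => hc1 (Fin.ext h)
      simp only [Matrix.of_apply]
      rw [if_neg hc2, if_neg (show ¬ (k:ℕ) = (c:ℕ)+1 by omega)]
      exact mul_zero _
    simp only [Matrix.of_apply]
    rw [if_neg (Fin.ne_of_val_ne (by omega) : k' ≠ k), if_pos (by omega : (k:ℕ) = (k':ℕ)+1),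
      if_pos trivial]
    have hIick' : Finset.Iic k' = Finset.Iio k := by
      ext x; simp only [Finset.mem_Iic, Finset.mem_Iio, Fin.le_def, Fin.lt_def]
      omega
    rcases lt_trichotomy (k : ℕ) ((i : ℕ) + 1) with hik | hik | hik
    · -- k ≤ i
      have hik' : (k : ℕ) ≤ (i : ℕ) := by omega
      have hmi : m ≤ (i : ℕ) := by omega
      have hm1i : m + 1 ≤ (i : ℕ) := by omega
      have hm1n : m + 1 ≤ n := le_of_lt (lt_of_le_of_lt hm1i i.isLt)
      have hm2n : m + 2 ≤ n := by have := i.isLt; omega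
      rw [if_pos hik', if_pos hmi]
      rw [tau_insert' T i k (m+1) hm hm1i, tau_insert' T i k' m rfl hmi,
        tau_Iic' T k (m+2) (by omega) hm2n, tau_Iic' T k' (m+1) rfl hm1n,
        tau_Iio' T k (m+1) hm hm1n]
      have hrec := mmat_expand a T hT i m hm1i hmi
      have hTik : T i ⟨m+1, lt_of_le_of_lt hm1i i.isLt⟩ = T i k :=
        congrArg₂ T rfl (Fin.ext hm.symm)
      rw [hTik] at hrec
      rw [hrec]
      have h1 : (pmat T (m+2) hm2n).det ≠ 0 := by
        rw [← tau_Iic' T k (m+2) (by omega) hm2n]; exact hτ k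
      have h2 : (pmat T (m+1) hm1n).det ≠ 0 := by
        rw [← tau_Iic' T k' (m+1) rfl hm1n]; exact hτ k'
      field_simp
      try ring
    · -- k = i + 1
      have hkeq : k' = i := Fin.ext (by omega)
      rw [if_neg (show ¬ (k : ℕ) ≤ (i : ℕ) by omega),
        if_pos (show (k' : ℕ) ≤ (i : ℕ) by omega)]
      rw [hkeq, Finset.Iio_insert]
      rw [hT, if_neg (show ¬ (k : ℕ) ≤ (i : ℕ) by omega),
        if_pos (show (k : ℕ) = (i : ℕ) + 1 by omega)]
      have := hτ i
      field_simp
      simp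
    · -- k > i + 1
      rw [if_neg (show ¬ (k : ℕ) ≤ (i : ℕ) by omega),
        if_neg (show ¬ (k' : ℕ) ≤ (i : ℕ) by omega)]
      rw [hT, if_neg (show ¬ (k : ℕ) ≤ (i : ℕ) by omega),
        if_neg (show ¬ (k : ℕ) = (i : ℕ) + 1 by omega)]
      ring
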